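/- Let k be a field of characteristic not 2 or 3 and E : y² = (x−α)(x−β)(x−γ) an elliptic curve with α, β, γ ∈ k. For a point P = (x, y) ∈ E(k), there exists Q ∈ E(k) with 2Q = P if and only if x−α, x−β, and x−γ are all squares in k. -/

import Mathlib

open WeierstrassCurve WeierstrassCurve.Affine

private lemma some_eq_some_aux {R : Type*} [CommRing R] {W : Affine R} {x₁ y₁ x₂ y₂ : R}
    (h₁ : W.Nonsingular x₁ y₁) (h₂ : W.Nonsingular x₂ y₂) (hx : x₁ = x₂) (hy : y₁ = y₂) :
    Point.some x₁ y₁ h₁ = Point.some x₂ y₂ h₂ := by subst hx; subst hy; rfl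

private lemma sq_aux {k : Type*} [Field k] (x₀ y₀ x e₁ e₂ e₃ : k) (h2y : 2 * y₀ ≠ 0)
    (heq : y₀ ^ 2 = (x₀ - e₁) * (x₀ - e₂) * (x₀ - e₃))
    (hx : (3 * x₀ ^ 2 - 2 * (e₁ + e₂ + e₃) * x₀ + (e₁ * e₂ + e₁ * e₃ + e₂ * e₃)) ^ 2
      = (x - (e₁ + e₂ + e₃) + 2 * x₀) * (4 * y₀ ^ 2)) :
    IsSquare (x - e₁) := by
  refine ⟨((x₀ - e₁) ^ 2 - (e₁ - e₂) * (e₁ - e₃)) / (2 * y₀), ?_⟩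
  rw [div_mul_div_comm, eq_div_iff (mul_ne_zero h2y h2y)]
  linear_combination -hx + (4 * (e₂ + e₃ - 2 * x₀)) * heq

open Classical in
/-- For an elliptic curve `E : y² = (x-α)(x-β)(x-γ)` over a field `k` of
characteristic not 2 or 3 and a point `P = (x, y) ∈ E(k)`, there exists `Q ∈ E(k)` with
`2Q = P` if and only if `x-α`, `x-β` and `x-γ` are all squares in `k`. -/
theorem stmt_1 (k : Type*) [Field k] (h2 : ringChar k ≠ 2) (h3 : ringChar k ≠ 3)
    (α β γ : k) (hαβ : α ≠ β) (hαγ : α ≠ γ) (hβγ : β ≠ γ)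
    (W : Affine k)
    (hW : W = { a₁ := 0, a₂ := -(α + β + γ), a₃ := 0,
                a₄ := α * β + α * γ + β * γ, a₆ := -(α * β * γ) })
    (x y : k) (h : W.Nonsingular x y) :
    (∃ Q : W.Point, 2 • Q = Point.some x y h) ↔
      IsSquare (x - α) ∧ IsSquare (x - β) ∧ IsSquare (x - γ) := by
  have h2' : (2 : k) ≠ 0 := Ring.two_ne_zero h2
  constructor
  · rintro ⟨Q, hQ⟩
    rw [two_nsmul] at hQ
    rcases Q with _ | @⟨x₀, y₀, h₀⟩
    · exact absurd hQ.symm (Point.some_ne_zero h)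
    by_cases hy₀ : y₀ = W.negY x₀ y₀
    · rw [Point.add_self_of_Y_eq hy₀] at hQ
      exact absurd hQ.symm (Point.some_ne_zero h)
    · rw [Point.add_self_of_Y_ne hy₀] at hQ
      have hx := (Point.some.inj hQ).1
      rw [slope_of_Y_ne rfl hy₀] at hx
      simp only [negY, hW, addX] at hx hy₀
      have hy₀' : y₀ ≠ 0 := by
        intro h0; apply hy₀; rw [h0]; ring
      have h2y : 2 * y₀ ≠ 0 := mul_ne_zero h2' hy₀'
      have heq₀ : y₀ ^ 2 = x₀ ^ 3 + -(α + β + γ) * x₀ ^ 2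
          + (α * β + α * γ + β * γ) * x₀ + -(α * β * γ) := by
        have := ((W.nonsingular_iff _ _).mp h₀).1
        rw [equation_iff] at this
        simp only [hW] at this
        linear_combination this
      have hden : y₀ - (-y₀ - x₀ * 0 - 0) ≠ 0 := fun h0 => h2y (by linear_combination h0)
      have hyy : y₀ + y₀ ≠ 0 := fun h0 => h2y (by linear_combination h0)
      field_simp at hx
      exact ⟨sq_aux x₀ y₀ x α β γ h2y (by linear_combination heq₀) (by linear_combination hx),
        sq_aux x₀ y₀ x β α γ h2y (by linear_combination heq₀) (by linear_combination hx),
        sq_aux x₀ y₀ x γ α β h2y (by linear_combination heq₀) (by linear_combination hx)⟩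
  · rintro ⟨⟨s, hs⟩, ⟨t, ht⟩, ⟨u₀, hu₀⟩⟩
    have heqP : y ^ 2 = x ^ 3 + -(α + β + γ) * x ^ 2
        + (α * β + α * γ + β * γ) * x + -(α * β * γ) := by
      have := ((W.nonsingular_iff _ _).mp h).1
      rw [equation_iff] at this
      simp only [hW] at this
      linear_combination this
    have hy2 : (y - s * t * u₀) * (y + s * t * u₀) = 0 := by
      linear_combination heqP + ((x - β) * (x - γ)) * hs + (s * s * (x - γ)) * ht
        + (s * s * t * t) * hu₀
    obtain ⟨u, hu, hy⟩ : ∃ u : k, x - γ = u * u ∧ y = s * t * u := by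
      rcases mul_eq_zero.mp hy2 with h' | h'
      · exact ⟨u₀, hu₀, by linear_combination h'⟩
      · exact ⟨-u₀, by linear_combination hu₀, by linear_combination h'⟩
    clear hy2 hu₀
    have hα : α = x - s * s := by linear_combination -hs
    have hβ : β = x - t * t := by linear_combination -ht
    have hγ : γ = x - u * u := by linear_combination -hu
    subst hα hβ hγ
    have hst : s + t ≠ 0 := fun hz => hαβ (by linear_combination (t - s) * hz)
    have hsu : s + u ≠ 0 := fun hz => hαγ (by linear_combination (u - s) * hz)
    have htu : t + u ≠ 0 := fun hz => hβγ (by linear_combination (u - t) * hz)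
    set x₀ : k := x + s * t + s * u + t * u with hx₀
    set y₀ : k := (s + t) * (s + u) * (t + u) with hy₀def
    have hy₀' : y₀ ≠ 0 := mul_ne_zero (mul_ne_zero hst hsu) htu
    have h₀ : W.Nonsingular x₀ y₀ := by
      rw [W.nonsingular_iff, W.equation_iff]
      constructor
      · simp only [hW]
        rw [hx₀, hy₀def]
        ring
      · right
        simp only [hW]
        intro h0
        exact mul_ne_zero h2' hy₀' (by linear_combination h0)
    have hy₀ne : y₀ ≠ W.negY x₀ y₀ := by
      simp only [negY, hW]
      intro h0
      exact mul_ne_zero h2' hy₀' (by linear_combination h0)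
    have hadd := Point.add_self_of_Y_ne (h₁ := h₀) hy₀ne
    have hden : y₀ - W.negY x₀ y₀ ≠ 0 := sub_ne_zero.mpr hy₀ne
    have hX : W.addX x₀ x₀ (W.slope x₀ x₀ y₀ y₀) = x := by
      rw [slope_of_Y_ne rfl hy₀ne]
      simp only [negY, hW, addX] at hden ⊢
      have hyy : y₀ + y₀ ≠ 0 := fun h0 => mul_ne_zero h2' hy₀' (by linear_combination h0)
      have hden' : y₀ - (-y₀ - x₀ * 0 - 0) ≠ 0 := fun h0 => mul_ne_zero h2' hy₀' (by linear_combination h0)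
      field_simp
      simp only [hx₀, hy₀def]
      ring
    have hQQ := nonsingular_add h₀ h₀ fun hc => hy₀ne hc.2
    have eq₃ := ((W.nonsingular_iff _ _).mp hQQ).1
    have eqP := ((W.nonsingular_iff _ _).mp h).1
    rcases Y_eq_of_X_eq eq₃ eqP hX with hY | hY
    · exact ⟨Point.some x₀ y₀ h₀, by rw [two_nsmul, hadd]; exact some_eq_some_aux _ _ hX hY⟩
    · refine ⟨-Point.some x₀ y₀ h₀, ?_⟩
      rw [two_nsmul, ← neg_add, hadd, Point.neg_some]
      refine some_eq_some_aux _ _ hX ?_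
      simp only [negY, hW] at hY ⊢
      linear_combination -hY
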